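/- A streak has at most one multiplicative structure: if ·' and ·'' are two total multiplications each making the streak X into a multiplicative prestreak (with respect to the same underlying streak structure), then a ·' b = a ·'' b for all a, b ∈ X. -/
import Mathlib


/-- A prestreak: a strict order (asymmetric and cotransitive) together with a
commutative additive monoid structure and a commutative multiplicative monoid
structure on the positive part, compatible with the order.  (The intrinsic
topology conditions of the paper are omitted, being vacuous in the classical
set-theoretic setting.) -/
structure Prestreak (X : Type*) where
  lt : X → X → Prop
  add : X → X → X
  zero : X
  mul : X → X → X
  one : X
  lt_asymm : ∀ a b, ¬ (lt a b ∧ lt b a)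
  lt_cotrans : ∀ a b x, lt a b → lt a x ∨ lt x b
  add_comm : ∀ a b, add a b = add b a
  add_assoc : ∀ a b c, add (add a b) c = add a (add b c)
  add_zero : ∀ a, add a zero = a
  zero_lt_one : lt zero one
  mul_pos : ∀ a b, lt zero a → lt zero b → lt zero (mul a b)
  mul_comm : ∀ a b, lt zero a → lt zero b → mul a b = mul b a
  mul_assoc : ∀ a b c, lt zero a → lt zero b → lt zero c →
    mul (mul a b) c = mul a (mul b c)
  mul_one : ∀ a, lt zero a → mul a one = a
  mul_add : ∀ a b c, lt zero a → lt zero b → lt zero c →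
    mul (add a b) c = add (mul a c) (mul b c)
  add_lt_add_iff : ∀ a b x, (lt (add a x) (add b x) ↔ lt a b)
  mul_lt_mul_iff : ∀ a b x, lt zero a → lt zero b → lt zero x →
    (lt (mul a x) (mul b x) ↔ lt a b)

namespace Prestreak

variable {X : Type*}

/-- Multiplication by a natural number: `0·a = 0`, `(n+1)·a = n·a + a`. -/
def nsmul (P : Prestreak X) : ℕ → X → X
  | 0, _ => P.zero
  | n + 1, a => P.add (nsmul P n a) a

/-- The canonical image of a natural number, `n ↦ n·1`. -/
def ofNat (P : Prestreak X) (n : ℕ) : X := P.nsmul n P.one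

/-- Comparison `x < q` of an element of a prestreak with a rational number,
using the canonical representation `q = (q.num⁺ − q.num⁻)/q.den`:
`x < (a−b)/c  :=  c·x + b < a`. -/
def ltQ (P : Prestreak X) (x : X) (q : ℚ) : Prop :=
  P.lt (P.add (P.nsmul q.den x) (P.ofNat ((-q.num).toNat))) (P.ofNat q.num.toNat)

/-- Comparison `q < x` of a rational with an element of a prestreak:
`(a−b)/c < x  :=  a < c·x + b`. -/
def qLt (P : Prestreak X) (q : ℚ) (x : X) : Prop :=
  P.lt (P.ofNat q.num.toNat) (P.add (P.nsmul q.den x) (P.ofNat ((-q.num).toNat)))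

/-- The archimedean property for prestreaks. -/
def Archimedean (P : Prestreak X) : Prop :=
  ∀ a b c d : X, P.lt b d →
    ∃ n : ℕ, P.lt (P.add a (P.nsmul n b)) (P.add c (P.nsmul n d))

/-- Tightness: antisymmetry of `≤` (where `a ≤ b := ¬ b < a`).
A streak is a tight archimedean prestreak. -/
def Tight (P : Prestreak X) : Prop :=
  ∀ a b : X, ¬ P.lt a b → ¬ P.lt b a → a = b

/-- The apartness relation `a # b := a < b ∨ b < a`. -/
def Apart (P : Prestreak X) (a b : X) : Prop := P.lt a b ∨ P.lt b a

/-- A morphism of prestreaks: preserves `<`, `+`, `0`, `1` and products of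
positive elements. -/
def IsHom {Y : Type*} (P : Prestreak X) (Q : Prestreak Y) (f : X → Y) : Prop :=
  (∀ a b, P.lt a b → Q.lt (f a) (f b)) ∧
  (∀ a b, f (P.add a b) = Q.add (f a) (f b)) ∧
  f P.zero = Q.zero ∧ f P.one = Q.one ∧
  (∀ a b, P.lt P.zero a → P.lt P.zero b → f (P.mul a b) = Q.mul (f a) (f b))

/-- A multiplicative structure on a prestreak: a total multiplication which is
commutative, associative, distributes over addition, has unit `1`, restricts to
the given multiplication on positive elements, and satisfies the multiplicity
condition. -/
def IsMultiplicative (P : Prestreak X) (tmul : X → X → X) : Prop :=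
  (∀ a b, tmul a b = tmul b a) ∧
  (∀ a b c, tmul (tmul a b) c = tmul a (tmul b c)) ∧
  (∀ a b c, tmul (P.add a b) c = P.add (tmul a c) (tmul b c)) ∧
  (∀ a, tmul a P.one = a) ∧
  (∀ a b, P.lt P.zero a → P.lt P.zero b → tmul a b = P.mul a b) ∧
  (∀ a b c d, P.lt b a → P.lt d c →
    P.lt (P.add (tmul a d) (tmul b c)) (P.add (tmul a c) (tmul b d)))

end Prestreak

namespace Prestreak

variable {X : Type*} (P : Prestreak X)

lemma not_lt_self' (a : X) : ¬ P.lt a a := fun h => P.lt_asymm a a ⟨h, h⟩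

lemma cancel' (hT : P.Tight) {u v : X} (c : X) (h : P.add u c = P.add v c) : u = v := by
  apply hT
  · intro hlt
    have h2 := (P.add_lt_add_iff u v c).mpr hlt
    rw [h] at h2
    exact P.not_lt_self' _ h2
  · intro hlt
    have h2 := (P.add_lt_add_iff v u c).mpr hlt
    rw [h] at h2
    exact P.not_lt_self' _ h2

lemma zero_add' (a : X) : P.add P.zero a = a := by rw [P.add_comm]; exact P.add_zero a

lemma nsmul_zero' : ∀ n : ℕ, P.nsmul n P.zero = P.zero
  | 0 => rfl
  | n + 1 => by rw [nsmul, nsmul_zero' n, P.add_zero]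

lemma tmul_zero' (hT : P.Tight) {t : X → X → X} (h : P.IsMultiplicative t) (a : X) :
    t a P.zero = P.zero := by
  have h1 : t (P.add P.zero P.zero) a = P.add (t P.zero a) (t P.zero a) := h.2.2.1 _ _ _
  rw [P.zero_add'] at h1
  have h2 : P.add (t P.zero a) (t P.zero a) = P.add P.zero (t P.zero a) := by
    rw [← h1, P.zero_add']
  have h3 := P.cancel' hT _ h2
  rw [h.1, h3]

lemma tmul_nsmul_one' (hT : P.Tight) {t : X → X → X} (h : P.IsMultiplicative t) :
    ∀ (k : ℕ) (a : X), t a (P.nsmul k P.one) = P.nsmul k a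
  | 0, a => P.tmul_zero' hT h a
  | k + 1, a => by
    show t a (P.add (P.nsmul k P.one) P.one) = P.add (P.nsmul k a) a
    rw [h.1, h.2.2.1, h.1 _ a, tmul_nsmul_one' hT h k a, h.1 P.one a, h.2.2.2.1]

lemma key' (hT : P.Tight) {t : X → X → X} (h : P.IsMultiplicative t) (a b : X) (n k : ℕ) :
    t (P.add a (P.nsmul n P.one)) (P.add b (P.nsmul k P.one)) =
      P.add (P.add (t a b) (P.nsmul k a))
        (P.add (P.nsmul n b) (P.nsmul n (P.nsmul k P.one))) := by
  rw [h.2.2.1]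
  congr 1
  · rw [h.1 a, h.2.2.1, h.1 b a, h.1 (P.nsmul k P.one) a, P.tmul_nsmul_one' hT h k a]
  · rw [h.1, h.2.2.1, P.tmul_nsmul_one' hT h n b,
      P.tmul_nsmul_one' hT h n (P.nsmul k P.one)]

end Prestreak

/-- A streak has at most one multiplicative structure. -/
theorem multiplicative_structure_unique {X : Type*} (P : Prestreak X)
    (hA : P.Archimedean) (hT : P.Tight)
    (m m' : X → X → X)
    (hm : P.IsMultiplicative m) (hm' : P.IsMultiplicative m') :
    ∀ a b : X, m a b = m' a b := by
  intro a b
  obtain ⟨n, hn⟩ := hA P.zero P.zero a P.one P.zero_lt_one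
  obtain ⟨k, hk⟩ := hA P.zero P.zero b P.one P.zero_lt_one
  rw [P.nsmul_zero', P.add_zero] at hn hk
  have e1 := P.key' hT hm a b n k
  have e2 := P.key' hT hm' a b n k
  have heq : m (P.add a (P.nsmul n P.one)) (P.add b (P.nsmul k P.one)) =
      m' (P.add a (P.nsmul n P.one)) (P.add b (P.nsmul k P.one)) := by
    rw [hm.2.2.2.2.1 _ _ hn hk, hm'.2.2.2.2.1 _ _ hn hk]
  rw [e1, e2, P.add_assoc, P.add_assoc] at heq
  exact P.cancel' hT _ heq
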